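/- If (m₀, m_{1/2}, …, m_{N/2}) belongs to the interior of the N-th fractional moment space on [0,1], then the entropy maximization problem with these fractional moment constraints admits a unique solution, of the form n^{ME}(S) = exp(−λ₀ − Σ_{i=1}^N λ_i S^{i/2}). -/

import Mathlib

open Real MeasureTheory

/-- Admissibility for the fractional-moment maximum entropy problem. -/
def MEAdmissible (N : ℕ) (m : Fin (N + 1) → ℝ) (n : ℝ → ℝ) : Prop :=
  (∀ S ∈ Set.Icc (0 : ℝ) 1, 0 ≤ n S) ∧
  IntegrableOn (fun S => n S * Real.log (n S)) (Set.Icc (0 : ℝ) 1) ∧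
  (∀ k : Fin (N + 1),
    IntegrableOn (fun S => S ^ (((k : ℕ) : ℝ) / 2) * n S) (Set.Icc (0 : ℝ) 1)) ∧
  (∀ k : Fin (N + 1), ∫ S in Set.Icc (0 : ℝ) 1, S ^ (((k : ℕ) : ℝ) / 2) * n S = m k)

/-- Shannon entropy of a size distribution on `[0,1]`. -/
noncomputable def shannonEntropy (n : ℝ → ℝ) : ℝ :=
  -∫ S in Set.Icc (0 : ℝ) 1, n S * Real.log (n S)

/-- The `N`-th fractional moment space on `[0,1]`. -/
def fracMomentSpace (N : ℕ) : Set (Fin (N + 1) → ℝ) :=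
  {v | ∃ μ : Measure ℝ, IsFiniteMeasure μ ∧ μ (Set.Icc (0 : ℝ) 1)ᶜ = 0 ∧
    ∀ k : Fin (N + 1), v k = ∫ x in Set.Icc (0 : ℝ) 1, x ^ (((k : ℕ) : ℝ) / 2) ∂μ}

namespace MaxEntAux

open Set

noncomputable def phi (N : ℕ) (k : Fin (N+1)) (S : ℝ) : ℝ := S ^ (((k:ℕ):ℝ)/2)

lemma phi_cont (N : ℕ) (k : Fin (N+1)) : Continuous (phi N k) := by
  exact continuous_iff_continuousAt.2 fun x =>
    Real.continuousAt_rpow_const x _ (Or.inr (by positivity))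

lemma phi_meas (N : ℕ) (k : Fin (N+1)) : Measurable (phi N k) := (phi_cont N k).measurable

lemma phi_nonneg (N : ℕ) (k : Fin (N+1)) {S : ℝ} (hS : S ∈ Icc (0:ℝ) 1) : 0 ≤ phi N k S :=
  Real.rpow_nonneg hS.1 _

lemma phi_le_one (N : ℕ) (k : Fin (N+1)) {S : ℝ} (hS : S ∈ Icc (0:ℝ) 1) : phi N k S ≤ 1 :=
  Real.rpow_le_one hS.1 hS.2 (by positivity)

noncomputable def dotphi (N : ℕ) (lam : Fin (N+1) → ℝ) (S : ℝ) : ℝ := ∑ k, lam k * phi N k S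

lemma dotphi_cont (N : ℕ) (lam : Fin (N+1) → ℝ) : Continuous (dotphi N lam) :=
  continuous_finset_sum _ fun k _ => continuous_const.mul (phi_cont N k)

lemma abs_dotphi_le (N : ℕ) (lam : Fin (N+1) → ℝ) {S : ℝ} (hS : S ∈ Icc (0:ℝ) 1) :
    |dotphi N lam S| ≤ ∑ k, |lam k| := by
  refine (Finset.abs_sum_le_sum_abs _ _).trans (Finset.sum_le_sum fun k _ => ?_)
  rw [abs_mul]
  exact mul_le_of_le_one_right (abs_nonneg _) (by
    rw [abs_of_nonneg (phi_nonneg N k hS)]; exact phi_le_one N k hS)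

lemma integrableOn_of_bdd' {μ : Measure ℝ} [IsFiniteMeasure μ] {f : ℝ → ℝ} {C : ℝ}
    (hf : Measurable f) (hC : ∀ S ∈ Icc (0:ℝ) 1, |f S| ≤ C) :
    IntegrableOn f (Icc (0:ℝ) 1) μ := by
  refine Integrable.mono' (g := fun _ => C)
    (integrableOn_const (measure_lt_top μ _).ne) hf.aestronglyMeasurable ?_
  filter_upwards [ae_restrict_mem measurableSet_Icc] with S hS using hC S hS

lemma integrableOn_of_bdd {f : ℝ → ℝ} {C : ℝ} (hf : Measurable f)
    (hC : ∀ S ∈ Icc (0:ℝ) 1, |f S| ≤ C) : IntegrableOn f (Icc (0:ℝ) 1) := by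
  refine Integrable.mono' (g := fun _ => C) (integrableOn_const (by simp))
    hf.aestronglyMeasurable ?_
  filter_upwards [ae_restrict_mem measurableSet_Icc] with S hS using hC S hS

noncomputable def G (N : ℕ) (m lam : Fin (N+1) → ℝ) : ℝ :=
  (∫ S in Icc (0:ℝ) 1, Real.exp (-(dotphi N lam S))) + ∑ k, lam k * m k

lemma integrable_exp_dot (N : ℕ) (lam : Fin (N+1) → ℝ) :
    IntegrableOn (fun S => Real.exp (-(dotphi N lam S))) (Icc (0:ℝ) 1) := by
  refine integrableOn_of_bdd (Real.measurable_exp.comp (dotphi_cont N lam).measurable.neg)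
    (C := Real.exp (∑ k, |lam k|)) fun S hS => ?_
  rw [abs_of_nonneg (Real.exp_nonneg _)]
  exact Real.exp_le_exp.2 (le_trans (neg_le_abs _) (by simpa using abs_dotphi_le N lam hS))


lemma fracMomentSpace_dot_nonneg {N : ℕ} {v u : Fin (N+1) → ℝ}
    (hv : v ∈ fracMomentSpace N) (hu : ∀ S ∈ Icc (0:ℝ) 1, 0 ≤ dotphi N u S) :
    0 ≤ ∑ k, u k * v k := by
  obtain ⟨μ, hfin, -, hmom⟩ := hv
  have hint : ∀ k : Fin (N+1), IntegrableOn (phi N k) (Icc (0:ℝ) 1) μ := fun k =>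
    integrableOn_of_bdd' (phi_meas N k) fun S hS => by
      rw [abs_of_nonneg (phi_nonneg N k hS)]; exact phi_le_one N k hS
  have : ∑ k, u k * v k = ∫ S in Icc (0:ℝ) 1, dotphi N u S ∂μ := by
    unfold dotphi
    rw [integral_finset_sum _ (fun k _ => (hint k).const_mul (u k))]
    exact Finset.sum_congr rfl fun k _ => by
      rw [hmom k, ← integral_const_mul]; rfl
  rw [this]
  exact setIntegral_nonneg measurableSet_Icc hu

lemma G_continuous (N : ℕ) (m : Fin (N+1) → ℝ) : Continuous (G N m) := by
  refine Continuous.add ?_ (continuous_finset_sum _ fun k _ =>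
    (continuous_apply k).mul continuous_const)
  rw [continuous_iff_continuousAt]
  intro lam₀
  refine continuousAt_of_dominated (F := fun lam S => Real.exp (-(dotphi N lam S)))
    (bound := fun _ => Real.exp ((∑ k, |lam₀ k|) + (N+1))) ?_ ?_ ?_ ?_
  · exact Filter.Eventually.of_forall fun lam =>
      (Real.continuous_exp.comp (dotphi_cont N lam).neg).aestronglyMeasurable
  · filter_upwards [Metric.ball_mem_nhds lam₀ one_pos] with lam hlam
    filter_upwards [ae_restrict_mem measurableSet_Icc] with S hS
    rw [Real.norm_eq_abs, abs_of_nonneg (Real.exp_nonneg _), Real.exp_le_exp]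
    refine le_trans (le_trans (neg_le_abs _) (by simpa using abs_dotphi_le N lam hS)) ?_
    have : ∀ k : Fin (N+1), |lam k| ≤ |lam₀ k| + 1 := fun k => by
      have h1 : dist lam lam₀ < 1 := Metric.mem_ball.1 hlam
      have h2 : dist (lam k) (lam₀ k) ≤ dist lam lam₀ := dist_le_pi_dist lam lam₀ k
      have h3 := abs_sub_abs_le_abs_sub (lam k) (lam₀ k)
      rw [← Real.dist_eq] at h3
      linarith
    calc ∑ k, |lam k| ≤ ∑ k : Fin (N+1), (|lam₀ k| + 1) := Finset.sum_le_sum fun k _ => this k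
      _ = (∑ k, |lam₀ k|) + (N+1) := by rw [Finset.sum_add_distrib]; simp
  · exact integrableOn_const (by simp)
  · filter_upwards [ae_restrict_mem measurableSet_Icc] with S _
    exact (Real.continuous_exp.comp
      ((continuous_finset_sum _ fun k _ => (continuous_apply k).mul continuous_const).neg)).continuousAt


lemma dotphi_smul (N : ℕ) (t : ℝ) (u : Fin (N+1) → ℝ) (S : ℝ) :
    dotphi N (t • u) S = t * dotphi N u S := by
  unfold dotphi
  rw [Finset.mul_sum]
  exact Finset.sum_congr rfl fun k _ => by simp [mul_assoc]

lemma dotphi_dist_le (N : ℕ) (u v : Fin (N+1) → ℝ) {S : ℝ} (hS : S ∈ Icc (0:ℝ) 1) :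
    |dotphi N u S - dotphi N v S| ≤ (N+1) * dist u v := by
  have : dotphi N u S - dotphi N v S = dotphi N (u - v) S := by
    unfold dotphi
    rw [← Finset.sum_sub_distrib]
    exact Finset.sum_congr rfl fun k _ => by simp [sub_mul]
  rw [this]
  refine (abs_dotphi_le N (u - v) hS).trans ?_
  have : ∀ k : Fin (N+1), |(u - v) k| ≤ dist u v := fun k => by
    simpa [Pi.sub_apply, Real.dist_eq] using dist_le_pi_dist u v k
  calc ∑ k, |(u - v) k| ≤ ∑ _k : Fin (N+1), dist u v := Finset.sum_le_sum fun k _ => this k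
    _ = (N+1) * dist u v := by simp [mul_comm]

lemma expPart_nonneg (N : ℕ) (lam : Fin (N+1) → ℝ) :
    0 ≤ ∫ S in Icc (0:ℝ) 1, Real.exp (-(dotphi N lam S)) :=
  setIntegral_nonneg measurableSet_Icc fun S _ => Real.exp_nonneg _

lemma coercive (N : ℕ) (m : Fin (N+1) → ℝ) (hm : m ∈ interior (fracMomentSpace N)) :
    ∃ R : ℝ, ∀ lam : Fin (N+1) → ℝ, R < ‖lam‖ → G N m 0 < G N m lam := by
  by_contra hcon
  push_neg at hcon
  -- extract a sequence
  have hseq : ∀ j : ℕ, ∃ lam : Fin (N+1) → ℝ, (j:ℝ) < ‖lam‖ ∧ G N m lam ≤ G N m 0 :=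
    fun j => hcon j
  choose L hL1 hL2 using hseq
  set c : ℝ := G N m 0 with hc
  set t : ℕ → ℝ := fun j => ‖L j‖ with ht
  have htpos : ∀ j, 0 < t j := fun j => lt_of_le_of_lt (Nat.cast_nonneg j) (hL1 j)
  set u : ℕ → Fin (N+1) → ℝ := fun j => (t j)⁻¹ • L j with hu
  have hu1 : ∀ j, u j ∈ Metric.sphere (0 : Fin (N+1) → ℝ) 1 := by
    intro j
    have h1 : ‖u j‖ = ‖(t j)⁻¹‖ * ‖L j‖ := norm_smul _ _
    rw [Real.norm_eq_abs, abs_of_pos (inv_pos.2 (htpos j)),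
      inv_mul_cancel₀ (ne_of_gt (htpos j))] at h1
    simpa [Metric.mem_sphere, dist_zero_right] using h1
  obtain ⟨x, hx, σ, hσ, hxlim⟩ :=
    (isCompact_sphere (0 : Fin (N+1) → ℝ) 1).tendsto_subseq hu1
  have hxnorm : ‖x‖ = 1 := by simpa using hx
  have hL : ∀ j, L j = t j • u j := fun j => by
    rw [hu, smul_smul, mul_inv_cancel₀ (ne_of_gt (htpos j)), one_smul]
  -- t (σ j) → ∞
  have htσ : Filter.Tendsto (fun j => t (σ j)) Filter.atTop Filter.atTop := by
    refine Filter.tendsto_atTop_mono (fun j => ?_) tendsto_natCast_atTop_atTop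
    exact le_of_lt (lt_of_le_of_lt (Nat.cast_le.2 (hσ.le_apply)) (hL1 (σ j)))
  -- linear part bound:  lam·m ≤ c
  have hlin : ∀ j, ∑ k, L j k * m k ≤ c := fun j => by
    have h0 := expPart_nonneg N (L j)
    have h1 := hL2 j
    have h2 : G N m (L j) =
        (∫ S in Icc (0:ℝ) 1, Real.exp (-(dotphi N (L j) S))) + ∑ k, L j k * m k := rfl
    rw [h2] at h1
    linarith
  have hudot : ∀ j, ∑ k, u j k * m k ≤ c / t j := by
    intro j
    rw [le_div_iff₀ (htpos j)]
    calc (∑ k, u j k * m k) * t j = ∑ k, L j k * m k := by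
          rw [Finset.sum_mul]
          refine Finset.sum_congr rfl fun k _ => ?_
          rw [hL j]
          simp only [Pi.smul_apply, smul_eq_mul]
          ring
      _ ≤ c := hlin j
  -- limit:  x·m ≤ 0
  have hxm : ∑ k, x k * m k ≤ 0 := by
    have hcont : Continuous (fun v : Fin (N+1) → ℝ => ∑ k, v k * m k) :=
      continuous_finset_sum _ fun k _ => (continuous_apply k).mul continuous_const
    have h1 : Filter.Tendsto (fun j => ∑ k, u (σ j) k * m k) Filter.atTop
        (nhds (∑ k, x k * m k)) := (hcont.tendsto x).comp hxlim
    have h2 : Filter.Tendsto (fun j => c / t (σ j)) Filter.atTop (nhds 0) :=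
      Filter.Tendsto.div_atTop tendsto_const_nhds htσ
    exact le_of_tendsto_of_tendsto h1 h2
      (Filter.Eventually.of_forall fun j => hudot (σ j))
  -- dichotomy
  by_cases hpos : ∀ S ∈ Icc (0:ℝ) 1, 0 ≤ dotphi N x S
  · -- interior argument
    obtain ⟨ε, hε, hball⟩ := Metric.mem_nhds_iff.1 (mem_interior_iff_mem_nhds.1 hm)
    set m' : Fin (N+1) → ℝ := m - (ε/2) • x with hm'
    have hm'mem : m' ∈ fracMomentSpace N := by
      apply hball
      rw [Metric.mem_ball, dist_eq_norm]
      have : m' - m = -((ε/2) • x) := by rw [hm']; abel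
      rw [this, norm_neg, norm_smul, hxnorm, mul_one, Real.norm_eq_abs,
        abs_of_pos (by linarith)]
      linarith
    have h1 : 0 ≤ ∑ k, x k * m' k := fracMomentSpace_dot_nonneg hm'mem hpos
    have h2 : ∑ k, x k * m' k = (∑ k, x k * m k) - (ε/2) * ∑ k, x k * x k := by
      rw [hm', Finset.mul_sum, ← Finset.sum_sub_distrib]
      exact Finset.sum_congr rfl fun k _ => by simp [mul_sub]; ring
    have h3 : 0 < ∑ k, x k * x k := by
      have hxne : x ≠ 0 := fun h => by rw [h] at hxnorm; simp at hxnorm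
      obtain ⟨k, hk⟩ := Function.ne_iff.1 hxne
      exact Finset.sum_pos' (fun k _ => mul_self_nonneg _)
        ⟨k, Finset.mem_univ k, mul_self_pos.2 hk⟩
    linarith [mul_pos (by linarith : (0:ℝ) < ε/2) h3]
  · -- negativity somewhere:  exponential blow up
    push_neg at hpos
    obtain ⟨S₀, hS₀, hneg⟩ := hpos
    set a : ℝ := -(dotphi N x S₀) / 2 with ha
    have hapos : 0 < a := by unfold a; linarith
    -- find δ with dotphi x < -a on ball S₀ δ
    have : ∀ᶠ S in nhds S₀, dotphi N x S < -a := by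
      refine (dotphi_cont N x).continuousAt.eventually_lt continuousAt_const ?_
      unfold a; linarith
    obtain ⟨δ, hδpos, hδ⟩ := Metric.eventually_nhds_iff_ball.1 this
    set p : ℝ := max 0 (S₀ - δ) with hp
    set q : ℝ := min 1 (S₀ + δ) with hq
    have hpq : p < q := by
      rcases hS₀ with ⟨h01, h02⟩
      rw [hp, hq]
      apply max_lt <;> apply lt_min <;> linarith
    set b : ℝ := q - p with hb
    have hbpos : 0 < b := by rw [hb]; linarith
    have hsub : Ioo p q ⊆ Icc (0:ℝ) 1 := fun S hS =>
      ⟨le_of_lt (lt_of_le_of_lt (le_max_left _ _) hS.1),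
       le_of_lt (lt_of_lt_of_le hS.2 (min_le_left _ _))⟩
    have hsubball : Ioo p q ⊆ Metric.ball S₀ δ := by
      intro S hS
      have h1 : S₀ - δ < S := lt_of_le_of_lt (le_max_right _ _) hS.1
      have h2 : S < S₀ + δ := lt_of_lt_of_le hS.2 (min_le_right _ _)
      rw [Metric.mem_ball, Real.dist_eq, abs_lt]
      constructor <;> linarith
    set K : ℝ := ∑ k, |m k| with hK
    have hKnn : 0 ≤ K := Finset.sum_nonneg fun k _ => abs_nonneg _
    -- exponential growth bound
    obtain ⟨Y, hY⟩ := Filter.eventually_atTop.1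
      (((Real.tendsto_mul_exp_add_div_pow_atTop b (-c) 1 hbpos).eventually_ge_atTop
        (2*(K+1)/a)).and (Filter.eventually_ge_atTop 1))
    have hgrow : ∀ y, Y ≤ y → c + (2*(K+1)/a) * y ≤ b * Real.exp y := by
      intro y hy
      obtain ⟨h1, h2⟩ := hY y hy
      rw [le_div_iff₀ (by positivity : (0:ℝ) < y ^ 1)] at h1
      rw [pow_one] at h1
      linarith
    -- choose j with t large and u close
    have hev1 : ∀ᶠ j in Filter.atTop, 2 * max Y 1 / a ≤ t (σ j) :=
      htσ.eventually_ge_atTop _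
    have hev2 : ∀ᶠ j in Filter.atTop, dist (u (σ j)) x < a / (2*(N+1)) :=
      hxlim (Metric.ball_mem_nhds x (by positivity))
    obtain ⟨j, hj1, hj2⟩ := (hev1.and hev2).exists
    set T : ℝ := t (σ j) with hT
    have hTpos : 0 < T := htpos (σ j)
    -- pointwise bound on Ioo p q
    have hw : ∀ S ∈ Ioo p q, dotphi N (u (σ j)) S < -(a/2) := by
      intro S hS
      have h1 : dotphi N x S < -a := hδ S (hsubball hS)
      have h2 := dotphi_dist_le N (u (σ j)) x (hsub hS)
      have h3 : ((N:ℝ)+1) * dist (u (σ j)) x < ((N:ℝ)+1) * (a / (2*(N+1))) :=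
        mul_lt_mul_of_pos_left hj2 (by positivity)
      have h4 : ((N:ℝ)+1) * (a / (2*(N+1))) = a/2 := by field_simp
      have h5 := abs_lt.1 (lt_of_le_of_lt h2 (h4 ▸ h3))
      linarith [h5.2]
    have hptw : ∀ S ∈ Ioo p q, Real.exp (a/2 * T) ≤ Real.exp (-(dotphi N (L (σ j)) S)) := by
      intro S hS
      rw [Real.exp_le_exp]
      have h1 := hw S hS
      have h2 : dotphi N (L (σ j)) S = T * dotphi N (u (σ j)) S := by
        rw [hL (σ j)]; exact dotphi_smul N _ _ S
      rw [h2]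
      nlinarith
    -- integral chain
    have I1 : b * Real.exp (a/2 * T) ≤ ∫ S in Ioo p q, Real.exp (-(dotphi N (L (σ j)) S)) := by
      have h0 : ∫ S in Ioo p q, Real.exp (a/2 * T) = b * Real.exp (a/2 * T) := by
        rw [setIntegral_const, Real.volume_real_Ioo_of_le (by linarith), smul_eq_mul]
      rw [← h0]
      exact setIntegral_mono_on (integrableOn_const (by
        rw [Real.volume_Ioo]; exact ENNReal.ofReal_ne_top))
        ((integrable_exp_dot N (L (σ j))).mono_set hsub) measurableSet_Ioo hptw
    have I2 : (∫ S in Ioo p q, Real.exp (-(dotphi N (L (σ j)) S))) ≤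
        ∫ S in Icc (0:ℝ) 1, Real.exp (-(dotphi N (L (σ j)) S)) :=
      setIntegral_mono_set (integrable_exp_dot N (L (σ j)))
        (Filter.Eventually.of_forall fun S => Real.exp_nonneg _) (HasSubset.Subset.eventuallyLE hsub)
    have I3 : (∫ S in Icc (0:ℝ) 1, Real.exp (-(dotphi N (L (σ j)) S))) ≤
        c - ∑ k, L (σ j) k * m k := by
      have h1 := hL2 (σ j)
      have h2 : G N m (L (σ j)) =
          (∫ S in Icc (0:ℝ) 1, Real.exp (-(dotphi N (L (σ j)) S))) + ∑ k, L (σ j) k * m k := rfl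
      rw [h2] at h1
      linarith
    have I4 : -∑ k, L (σ j) k * m k ≤ T * K := by
      have h1 : |∑ k, L (σ j) k * m k| ≤ T * K := by
        refine (Finset.abs_sum_le_sum_abs _ _).trans ?_
        rw [hK, Finset.mul_sum]
        refine Finset.sum_le_sum fun k _ => ?_
        rw [abs_mul]
        exact mul_le_mul_of_nonneg_right (by
          simpa [Real.norm_eq_abs] using norm_le_pi_norm (L (σ j)) k) (abs_nonneg _)
      linarith [neg_abs_le (∑ k, L (σ j) k * m k)]
    -- growth contradiction
    have hyT : Y ≤ a/2 * T := by
      have h1 : 2 * max Y 1 / a * (a/2) ≤ T * (a/2) :=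
        mul_le_mul_of_nonneg_right hj1 (by linarith)
      have h2 : 2 * max Y 1 / a * (a/2) = max Y 1 := by field_simp
      calc Y ≤ max Y 1 := le_max_left _ _
        _ = 2 * max Y 1 / a * (a/2) := h2.symm
        _ ≤ T * (a/2) := h1
        _ = a/2 * T := by ring
    have hfin := hgrow _ hyT
    have hTK : c + (2*(K+1)/a) * (a/2 * T) = c + (K+1) * T := by field_simp
    rw [hTK] at hfin
    nlinarith


lemma exists_min (N : ℕ) (m : Fin (N+1) → ℝ) (hm : m ∈ interior (fracMomentSpace N)) :
    ∃ lam : Fin (N+1) → ℝ, ∀ v, G N m lam ≤ G N m v := by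
  obtain ⟨R, hR⟩ := coercive N m hm
  set R' : ℝ := max R 0 with hR'
  have hKc : IsCompact (Metric.closedBall (0 : Fin (N+1) → ℝ) (R'+1)) :=
    isCompact_closedBall _ _
  have hKne : (Metric.closedBall (0 : Fin (N+1) → ℝ) (R'+1)).Nonempty :=
    ⟨0, by simp [hR']; positivity⟩
  obtain ⟨lam, hlamK, hlam⟩ := hKc.exists_isMinOn hKne ((G_continuous N m).continuousOn)
  refine ⟨lam, fun v => ?_⟩
  by_cases hv : v ∈ Metric.closedBall (0 : Fin (N+1) → ℝ) (R'+1)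
  · exact hlam hv
  · have h0 : (0 : Fin (N+1) → ℝ) ∈ Metric.closedBall (0 : Fin (N+1) → ℝ) (R'+1) := by
      simp [hR']; positivity
    have h1 : R < ‖v‖ := by
      rw [Metric.mem_closedBall, dist_zero_right, not_le] at hv
      calc R ≤ R' := le_max_left _ _
        _ < R' + 1 := by linarith
        _ < ‖v‖ := hv
    exact le_of_lt (lt_of_le_of_lt (hlam h0) (hR v h1))

lemma dotphi_add_single (N : ℕ) (lam : Fin (N+1) → ℝ) (k : Fin (N+1)) (τ : ℝ) (S : ℝ) :
    dotphi N (lam + τ • (Pi.single k 1 : Fin (N+1) → ℝ)) S = dotphi N lam S + τ * phi N k S := by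
  unfold dotphi
  have h : ∀ k' : Fin (N+1), (lam + τ • (Pi.single k 1 : Fin (N+1) → ℝ)) k' * phi N k' S =
      lam k' * phi N k' S + (if k' = k then τ * phi N k S else 0) := by
    intro k'
    by_cases h : k' = k <;> simp [h, Pi.single_apply, add_mul]
  rw [Finset.sum_congr rfl fun k' _ => h k', Finset.sum_add_distrib, Finset.sum_ite_eq']
  simp

lemma linpart_single (N : ℕ) (m lam : Fin (N+1) → ℝ) (k : Fin (N+1)) (τ : ℝ) :
    ∑ k', (lam + τ • (Pi.single k 1 : Fin (N+1) → ℝ)) k' * m k' =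
      (∑ k', lam k' * m k') + τ * m k := by
  have h : ∀ k' : Fin (N+1), (lam + τ • (Pi.single k 1 : Fin (N+1) → ℝ)) k' * m k' =
      lam k' * m k' + (if k' = k then τ * m k else 0) := by
    intro k'
    by_cases h : k' = k <;> simp [h, Pi.single_apply, add_mul]
  rw [Finset.sum_congr rfl fun k' _ => h k', Finset.sum_add_distrib, Finset.sum_ite_eq']
  simp

lemma stationarity (N : ℕ) (m : Fin (N+1) → ℝ) (lam : Fin (N+1) → ℝ)
    (hmin : ∀ v, G N m lam ≤ G N m v) (k : Fin (N+1)) :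
    ∫ S in Icc (0:ℝ) 1, phi N k S * Real.exp (-(dotphi N lam S)) = m k := by
  set F : ℝ → ℝ → ℝ := fun τ S => Real.exp (-(dotphi N lam S + τ * phi N k S)) with hF
  set F' : ℝ → ℝ → ℝ := fun τ S => -(phi N k S) * Real.exp (-(dotphi N lam S + τ * phi N k S))
    with hF'
  have hexp_bd : ∀ τ : ℝ, |τ| ≤ 1 → ∀ S ∈ Icc (0:ℝ) 1,
      Real.exp (-(dotphi N lam S + τ * phi N k S)) ≤ Real.exp ((∑ k', |lam k'|) + 1) := by
    intro τ hτ S hS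
    rw [Real.exp_le_exp]
    have h1 := abs_dotphi_le N lam hS
    have h2 : |τ * phi N k S| ≤ 1 := by
      rw [abs_mul, abs_of_nonneg (phi_nonneg N k hS)]
      exact mul_le_one₀ hτ (phi_nonneg N k hS) (phi_le_one N k hS)
    calc -(dotphi N lam S + τ * phi N k S) ≤ |dotphi N lam S + τ * phi N k S| := neg_le_abs _
      _ ≤ |dotphi N lam S| + |τ * phi N k S| := abs_add_le _ _
      _ ≤ (∑ k', |lam k'|) + 1 := add_le_add h1 h2
  have hbd : ∀ τ : ℝ, |τ| ≤ 1 → ∀ S ∈ Icc (0:ℝ) 1,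
      |F' τ S| ≤ Real.exp ((∑ k', |lam k'|) + 1) := by
    intro τ hτ S hS
    rw [hF']
    rw [abs_mul, abs_neg, abs_of_nonneg (Real.exp_nonneg _), abs_of_nonneg (phi_nonneg N k hS)]
    calc phi N k S * Real.exp (-(dotphi N lam S + τ * phi N k S))
        ≤ 1 * Real.exp (-(dotphi N lam S + τ * phi N k S)) :=
          mul_le_mul_of_nonneg_right (phi_le_one N k hS) (Real.exp_nonneg _)
      _ ≤ Real.exp ((∑ k', |lam k'|) + 1) := by
          rw [one_mul]; exact hexp_bd τ hτ S hS
  -- measurability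
  have hmeasF : ∀ τ : ℝ, AEStronglyMeasurable (F τ) (volume.restrict (Icc (0:ℝ) 1)) := by
    intro τ
    exact (Real.continuous_exp.comp
      ((dotphi_cont N lam).add (continuous_const.mul (phi_cont N k))).neg).aestronglyMeasurable
  have hmeasF' : AEStronglyMeasurable (F' 0) (volume.restrict (Icc (0:ℝ) 1)) := by
    exact (((phi_cont N k).neg).mul (Real.continuous_exp.comp
      ((dotphi_cont N lam).add (continuous_const.mul (phi_cont N k))).neg)).aestronglyMeasurable
  -- derivative of the integral
  have hderiv := hasDerivAt_integral_of_dominated_loc_of_deriv_le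
    (F := F) (F' := F') (x₀ := (0:ℝ)) (bound := fun _ => Real.exp ((∑ k', |lam k'|) + 1))
    (μ := volume.restrict (Icc (0:ℝ) 1)) (Metric.ball_mem_nhds (0:ℝ) one_pos)
    (Filter.Eventually.of_forall hmeasF)
    (by
      refine integrableOn_of_bdd (f := F 0) (C := Real.exp ((∑ k', |lam k'|) + 1)) ?_ ?_
      · exact (Real.continuous_exp.comp
          ((dotphi_cont N lam).add (continuous_const.mul (phi_cont N k))).neg).measurable
      · intro S hS
        rw [hF, abs_of_nonneg (Real.exp_nonneg _)]
        exact hexp_bd 0 (by simp) S hS)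
    hmeasF'
    (by
      filter_upwards [ae_restrict_mem measurableSet_Icc] with S hS
      intro τ hτ
      exact hbd τ (le_of_lt (by simpa [Real.dist_eq] using hτ)) S hS)
    (integrableOn_const (by simp))
    (by
      filter_upwards [ae_restrict_mem measurableSet_Icc] with S hS
      intro τ hτ
      have : HasDerivAt (fun τ' : ℝ => -(dotphi N lam S + τ' * phi N k S))
          (-(phi N k S)) τ := by
        have h := (((hasDerivAt_id' τ).mul_const (phi N k S)).const_add (dotphi N lam S)).neg
        rw [one_mul] at h
        exact h
      simpa [hF, hF', mul_comm] using this.exp)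
  obtain ⟨-, hderiv⟩ := hderiv
  -- the one-variable function
  set g : ℝ → ℝ := fun τ => G N m (lam + τ • (Pi.single k 1 : Fin (N+1) → ℝ)) with hg
  have hgeq : g = fun τ => (∫ S in Icc (0:ℝ) 1, F τ S) + ((∑ k', lam k' * m k') + τ * m k) := by
    funext τ
    rw [hg]
    show G N m _ = _
    unfold G
    rw [linpart_single]
    congr 1
    refine setIntegral_congr_fun measurableSet_Icc fun S _ => ?_
    rw [dotphi_add_single, hF]
  have hgmin : IsLocalMin g 0 := by
    refine IsMinOn.isLocalMin (s := Set.univ) ?_ Filter.univ_mem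
    intro τ _
    simp only [mem_setOf_eq]
    have h0 : g 0 = G N m lam := by simp [hg]
    rw [h0]
    exact hmin _
  have hgderiv : HasDerivAt g ((∫ S in Icc (0:ℝ) 1, F' 0 S) + m k) 0 := by
    rw [hgeq]
    have h2 : HasDerivAt (fun τ : ℝ => (∑ k', lam k' * m k') + τ * m k) (m k) 0 := by
      simpa using ((hasDerivAt_id (0:ℝ)).mul_const (m k)).const_add (∑ k', lam k' * m k')
    exact hderiv.add h2
  have hzero := hgmin.hasDerivAt_eq_zero hgderiv
  have hF'eq : ∫ S in Icc (0:ℝ) 1, F' 0 S =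
      -∫ S in Icc (0:ℝ) 1, phi N k S * Real.exp (-(dotphi N lam S)) := by
    rw [← integral_neg]
    refine setIntegral_congr_fun measurableSet_Icc fun S _ => ?_
    rw [hF']
    ring_nf
  rw [hF'eq] at hzero
  linarith


lemma gibbs_ptwise {x y : ℝ} (hx : 0 ≤ x) (hy : 0 < y) :
    0 ≤ x * Real.log x - x * Real.log y - x + y := by
  rcases eq_or_lt_of_le hx with h | h
  · rw [← h]; simp; linarith
  · have hyx : 0 < y / x := div_pos hy h
    have h1 := Real.log_le_sub_one_of_pos hyx
    rw [Real.log_div (ne_of_gt hy) (ne_of_gt h)] at h1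
    have h2 := mul_le_mul_of_nonneg_left h1 (le_of_lt h)
    have h3 : x * (y / x) = y := by field_simp
    nlinarith

lemma gibbs_eq {x y : ℝ} (hx : 0 ≤ x) (hy : 0 < y)
    (heq : x * Real.log x - x * Real.log y - x + y = 0) : x = y := by
  rcases eq_or_lt_of_le hx with h | h
  · exfalso; rw [← h] at heq; simp at heq; linarith
  · by_contra hne
    have hyx : 0 < y / x := div_pos hy h
    have hne1 : y / x ≠ 1 := by
      intro h1
      rw [div_eq_one_iff_eq (ne_of_gt h)] at h1
      exact hne h1.symm
    have h1 := Real.log_lt_sub_one_of_pos hyx hne1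
    rw [Real.log_div (ne_of_gt hy) (ne_of_gt h)] at h1
    have h2 := (mul_lt_mul_iff_right₀ h).2 h1
    have h3 : x * (y / x) = y := by field_simp
    nlinarith

noncomputable def nME (N : ℕ) (lam : Fin (N+1) → ℝ) (S : ℝ) : ℝ :=
  Real.exp (-(dotphi N lam S))

lemma log_nME (N : ℕ) (lam : Fin (N+1) → ℝ) (S : ℝ) :
    Real.log (nME N lam S) = -(dotphi N lam S) := Real.log_exp _

lemma phi_zero (N : ℕ) (S : ℝ) : phi N 0 S = 1 := by
  unfold phi
  rw [show ((((0:Fin (N+1)):ℕ):ℝ)/2 : ℝ) = 0 by simp, Real.rpow_zero]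

lemma n_log_nME_ptwise (N : ℕ) (lam : Fin (N+1) → ℝ) (n : ℝ → ℝ) (S : ℝ) :
    n S * Real.log (nME N lam S) = -∑ k, lam k * (phi N k S * n S) := by
  have h : n S * dotphi N lam S = ∑ k, lam k * (phi N k S * n S) := by
    unfold dotphi
    rw [Finset.mul_sum]
    exact Finset.sum_congr rfl fun k _ => by ring
  rw [log_nME, mul_neg, h]

-- integrability and value of ∫ n·log nME for n with integrable moments
lemma n_log_nME_integrable (N : ℕ) (lam : Fin (N+1) → ℝ) (n : ℝ → ℝ)
    (hint : ∀ k : Fin (N+1), IntegrableOn (fun S => phi N k S * n S) (Icc (0:ℝ) 1)) :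
    IntegrableOn (fun S => n S * Real.log (nME N lam S)) (Icc (0:ℝ) 1) := by
  have h1 : IntegrableOn (fun S => ∑ k, lam k * (phi N k S * n S)) (Icc (0:ℝ) 1) :=
    integrable_finset_sum _ fun k _ => (hint k).const_mul _
  refine h1.neg.congr (Filter.Eventually.of_forall fun S => ?_)
  show -(∑ k, lam k * (phi N k S * n S)) = n S * Real.log (nME N lam S)
  rw [n_log_nME_ptwise]

lemma n_log_nME_integral (N : ℕ) (m : Fin (N+1) → ℝ) (lam : Fin (N+1) → ℝ) (n : ℝ → ℝ)
    (hint : ∀ k : Fin (N+1), IntegrableOn (fun S => phi N k S * n S) (Icc (0:ℝ) 1))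
    (hmom : ∀ k : Fin (N+1), ∫ S in Icc (0:ℝ) 1, phi N k S * n S = m k) :
    ∫ S in Icc (0:ℝ) 1, n S * Real.log (nME N lam S) = -∑ k, lam k * m k := by
  have h0 : ∀ S : ℝ, n S * Real.log (nME N lam S) = -∑ k, lam k * (phi N k S * n S) :=
    n_log_nME_ptwise N lam n
  rw [setIntegral_congr_fun measurableSet_Icc fun S _ => h0 S, integral_neg,
    integral_finset_sum _ fun k _ => (hint k).const_mul _, neg_inj]
  exact Finset.sum_congr rfl fun k _ => by rw [integral_const_mul, hmom k]

lemma n_integral (N : ℕ) (m : Fin (N+1) → ℝ) (n : ℝ → ℝ)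
    (hint : ∀ k : Fin (N+1), IntegrableOn (fun S => phi N k S * n S) (Icc (0:ℝ) 1))
    (hmom : ∀ k : Fin (N+1), ∫ S in Icc (0:ℝ) 1, phi N k S * n S = m k) :
    IntegrableOn n (Icc (0:ℝ) 1) ∧ ∫ S in Icc (0:ℝ) 1, n S = m 0 := by
  constructor
  · exact (hint 0).congr (Filter.Eventually.of_forall fun S => by
      show phi N 0 S * n S = n S
      rw [phi_zero, one_mul])
  · rw [← hmom 0]
    exact setIntegral_congr_fun measurableSet_Icc fun S _ => by
      show n S = phi N 0 S * n S
      rw [phi_zero, one_mul]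


lemma sum_abs_lam_bound (N : ℕ) (lam : Fin (N+1) → ℝ) {S : ℝ} (hS : S ∈ Icc (0:ℝ) 1) :
    Real.exp (-(dotphi N lam S)) ≤ Real.exp (∑ k, |lam k|) :=
  Real.exp_le_exp.2 (le_trans (neg_le_abs _) (abs_dotphi_le N lam hS))

lemma hint_nME (N : ℕ) (lam : Fin (N+1) → ℝ) (k : Fin (N+1)) :
    IntegrableOn (fun S => phi N k S * nME N lam S) (Icc (0:ℝ) 1) := by
  refine integrableOn_of_bdd (C := Real.exp (∑ k', |lam k'|))
    ((phi_meas N k).mul (Real.measurable_exp.comp (dotphi_cont N lam).measurable.neg)) ?_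
  intro S hS
  unfold nME
  rw [abs_mul, abs_of_nonneg (phi_nonneg N k hS), abs_of_nonneg (Real.exp_nonneg _)]
  calc phi N k S * Real.exp (-(dotphi N lam S)) ≤ 1 * Real.exp (-(dotphi N lam S)) :=
        mul_le_mul_of_nonneg_right (phi_le_one N k hS) (Real.exp_nonneg _)
    _ ≤ Real.exp (∑ k', |lam k'|) := by rw [one_mul]; exact sum_abs_lam_bound N lam hS

lemma nME_admissible (N : ℕ) (m : Fin (N+1) → ℝ) (lam : Fin (N+1) → ℝ)
    (hstat : ∀ k, ∫ S in Icc (0:ℝ) 1, phi N k S * nME N lam S = m k) :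
    MEAdmissible N m (nME N lam) := by
  refine ⟨fun S _ => Real.exp_nonneg _, ?_, fun k => hint_nME N lam k, fun k => hstat k⟩
  refine integrableOn_of_bdd
    (C := Real.exp (∑ k', |lam k'|) * (∑ k', |lam k'|)) ?_ ?_
  · exact (Real.measurable_exp.comp (dotphi_cont N lam).measurable.neg).mul
      ((Real.measurable_exp.comp (dotphi_cont N lam).measurable.neg).log)
  · intro S hS
    show |nME N lam S * Real.log (nME N lam S)| ≤ _
    unfold nME
    rw [Real.log_exp, abs_mul, abs_of_nonneg (Real.exp_nonneg _), abs_neg]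
    exact mul_le_mul (sum_abs_lam_bound N lam hS) (abs_dotphi_le N lam hS)
      (abs_nonneg _) (Real.exp_nonneg _)

lemma gibbs_integral (N : ℕ) (m : Fin (N+1) → ℝ) (lam : Fin (N+1) → ℝ)
    (hstat : ∀ k, ∫ S in Icc (0:ℝ) 1, phi N k S * nME N lam S = m k)
    (n : ℝ → ℝ) (hadm : MEAdmissible N m n) :
    IntegrableOn (fun S => n S * Real.log (n S) - n S * Real.log (nME N lam S)
        - n S + nME N lam S) (Icc (0:ℝ) 1) ∧
    ∫ S in Icc (0:ℝ) 1, (n S * Real.log (n S) - n S * Real.log (nME N lam S)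
        - n S + nME N lam S)
      = (∫ S in Icc (0:ℝ) 1, n S * Real.log (n S)) + ∑ k, lam k * m k := by
  obtain ⟨hnn, hnint, hnint2, hnmom⟩ := hadm
  have hint' : ∀ k : Fin (N+1), IntegrableOn (fun S => phi N k S * n S) (Icc (0:ℝ) 1) :=
    fun k => hnint2 k
  have hmom' : ∀ k : Fin (N+1), ∫ S in Icc (0:ℝ) 1, phi N k S * n S = m k := fun k => hnmom k
  have hlogint := n_log_nME_integrable N lam n hint'
  have hlogval := n_log_nME_integral N m lam n hint' hmom'
  obtain ⟨hnint0, hnval⟩ := n_integral N m n hint' hmom'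
  obtain ⟨hMEint0, hMEval⟩ := n_integral N m (nME N lam) (hint_nME N lam) hstat
  have hf1 : IntegrableOn (fun S => n S * Real.log (n S) - n S * Real.log (nME N lam S))
      (Icc (0:ℝ) 1) := hnint.sub hlogint
  have hf2 : IntegrableOn (fun S => n S * Real.log (n S) - n S * Real.log (nME N lam S) - n S)
      (Icc (0:ℝ) 1) := hf1.sub hnint0
  have hf3 : IntegrableOn (fun S => n S * Real.log (n S) - n S * Real.log (nME N lam S)
      - n S + nME N lam S) (Icc (0:ℝ) 1) := hf2.add hMEint0
  refine ⟨hf3, ?_⟩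
  rw [integral_add hf2 hMEint0, integral_sub hf1 hnint0, integral_sub hnint hlogint,
    hlogval, hnval, hMEval]
  ring

end MaxEntAux

open MaxEntAux

/-- If the fractional moment vector lies in the interior of the moment space, the entropy
maximization problem admits a solution, unique a.e., of exponential form. -/
theorem maxEntropy_exists_unique_of_interior (N : ℕ) (m : Fin (N + 1) → ℝ)
    (hm : m ∈ interior (fracMomentSpace N)) :
    ∃ nME : ℝ → ℝ,
      MEAdmissible N m nME ∧
      (∀ n, MEAdmissible N m n → shannonEntropy n ≤ shannonEntropy nME) ∧
      (∃ lam : Fin (N + 1) → ℝ, ∀ S ∈ Set.Icc (0 : ℝ) 1,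
        nME S = Real.exp (-(lam 0) -
          ∑ i ∈ Finset.Icc 1 N, lam (Fin.ofNat (N + 1) i) * S ^ ((i : ℝ) / 2))) ∧
      (∀ n', MEAdmissible N m n' →
        (∀ n, MEAdmissible N m n → shannonEntropy n ≤ shannonEntropy n') →
        ∀ᵐ S ∂(volume.restrict (Set.Icc (0 : ℝ) 1)), n' S = nME S) := by
  classical
  obtain ⟨lam, hmin⟩ := exists_min N m hm
  have hstat : ∀ k, ∫ S in Set.Icc (0:ℝ) 1, phi N k S * nME N lam S = m k := by
    intro k
    have := stationarity N m lam hmin k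
    rw [← this]
    rfl
  have hadm : MEAdmissible N m (nME N lam) := nME_admissible N m lam hstat
  -- entropy of nME
  have hMEent : shannonEntropy (nME N lam) = ∑ k, lam k * m k := by
    unfold shannonEntropy
    have := n_log_nME_integral N m lam (nME N lam) (hint_nME N lam) hstat
    rw [show (∫ S in Set.Icc (0:ℝ) 1, nME N lam S * Real.log (nME N lam S))
        = -∑ k, lam k * m k from this]
    ring
  -- maximality
  have hmax : ∀ n, MEAdmissible N m n → shannonEntropy n ≤ shannonEntropy (nME N lam) := by
    intro n hn
    obtain ⟨hgint, hgval⟩ := gibbs_integral N m lam hstat n hn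
    have hg0 : 0 ≤ ∫ S in Set.Icc (0:ℝ) 1, (n S * Real.log (n S)
        - n S * Real.log (nME N lam S) - n S + nME N lam S) := by
      refine setIntegral_nonneg measurableSet_Icc fun S hS => ?_
      exact gibbs_ptwise (hn.1 S hS) (Real.exp_pos _)
    rw [hgval] at hg0
    rw [hMEent]
    unfold shannonEntropy
    linarith
  refine ⟨nME N lam, hadm, hmax, ⟨lam, ?_⟩, ?_⟩
  · -- exponential form
    intro S hS
    unfold nME
    rw [Real.exp_eq_exp]
    have h1 : ∑ k : Fin (N+1), lam k * phi N k S
        = ∑ i ∈ Finset.range (N+1), lam (Fin.ofNat (N+1) i) * S ^ ((i:ℝ)/2) := by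
      rw [← Fin.sum_univ_eq_sum_range (fun i => lam (Fin.ofNat (N+1) i) * S ^ ((i:ℝ)/2)) (N+1)]
      refine Finset.sum_congr rfl fun k _ => ?_
      rw [Fin.ofNat_val_eq_self]
      rfl
    have h2 : Finset.range (N+1) = insert 0 (Finset.Icc 1 N) := by
      ext i
      simp only [Finset.mem_range, Finset.mem_insert, Finset.mem_Icc]
      omega
    rw [show dotphi N lam S = ∑ k : Fin (N+1), lam k * phi N k S from rfl, h1, h2,
      Finset.sum_insert (by simp)]
    have h3 : lam (Fin.ofNat (N+1) 0) * S ^ (((0:ℕ):ℝ)/2) = lam 0 := by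
      norm_num
    rw [h3]
    ring
  · -- uniqueness
    intro n' hadm' hmax'
    have heq : shannonEntropy n' = ∑ k, lam k * m k := by
      have h1 := hmax' (nME N lam) hadm
      have h2 := hmax n' hadm'
      rw [hMEent] at h1 h2
      linarith
    obtain ⟨hgint, hgval⟩ := gibbs_integral N m lam hstat n' hadm'
    have hzero : ∫ S in Set.Icc (0:ℝ) 1, (n' S * Real.log (n' S)
        - n' S * Real.log (nME N lam S) - n' S + nME N lam S) = 0 := by
      rw [hgval]
      unfold shannonEntropy at heq
      linarith
    have hae : (fun S => n' S * Real.log (n' S) - n' S * Real.log (nME N lam S)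
        - n' S + nME N lam S) =ᵐ[volume.restrict (Set.Icc (0:ℝ) 1)] 0 := by
      refine (integral_eq_zero_iff_of_nonneg_ae ?_ hgint).1 hzero
      filter_upwards [ae_restrict_mem measurableSet_Icc] with S hS
      exact gibbs_ptwise (hadm'.1 S hS) (Real.exp_pos _)
    filter_upwards [hae, ae_restrict_mem measurableSet_Icc] with S hS1 hS2
    exact gibbs_eq (hadm'.1 S hS2) (Real.exp_pos _) (by simpa using hS1)
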